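/- For every f in [0, 1/2] and every T ≥ log₂(1/ε) + 2.575 (with ε in (0,1)), (2f(1-f))^T ≤ ε · f² / (f² + (1-f)²). -/

import Mathlib

lemma sos_identity (f : ℝ) :
    1 - 4*(1-f)^2*(1-2*f+2*f^2)*((17/40)*((481:ℝ)/500)^23 + ((23/40)*((500:ℝ)/481)^17)*(2*f*(1-f)))
    = ((360739494149056144626635213617685947869661804286976290279517903:ℝ)/1192092895507812500000000000000000000000000000000000000000000000) * ((1:ℝ)*f^0 + ((-14352663976105727566438443266897859014692402206491346011917921085300706462364209922644512493930303903613299166:ℝ)/1424491920415468741939068750132320706407001847540793245216773042650353231182104961322256246965151951806649583)*f^1 + ((5079150199890136718750000000000000000000000000000000000000000000:ℝ)/360739494149056144626635213617685947869661804286976290279517903)*f^2 + ((-574827194213867187500000000000000000000000000000000000000000000:ℝ)/120246498049685381542211737872561982623220601428992096759839301)*f^3)^2 + ((2105884854916488562170588829640174497926308924155826885792004024829956483862883403231335353496341196691848493643860280705060692856571461872096415352836111053831673878319368414253868764545322958828225786769247262221667:ℝ)/6705580620995012062862383913394399902753991318783584285956882848383550956546857486799880916899919956085332783230294334872674521189127819656609313152887896299362182617187500000000000000000000000000000000000000000000000)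 * ((1:ℝ)*f^1 + ((-16183496535598000321533052599245909575730897256393754481009716744972605319417646769453231079574693543435985886611799300603373865596500691830408130334316895069725610035545930914253868764545322958828225786769247262221667:ℝ)/2105884854916488562170588829640174497926308924155826885792004024829956483862883403231335353496341196691848493643860280705060692856571461872096415352836111053831673878319368414253868764545322958828225786769247262221667)*f^2 + ((11133832281715956996423963422342287295426569724286032546203492028002357963150460515351942723284801091269004625239722091886209566418056846550275421673722045163869857788085937500000000000000000000000000000000000000000000:ℝ)/2105884854916488562170588829640174497926308924155826885792004024829956483862883403231335353496341196691848493643860280705060692856571461872096415352836111053831673878319368414253868764545322958828225786769247262221667)*f^3)^2 + ((2390380161542882947772899787556104022118498394049089512371001602012466343782941685714836103355405971098197239871215429062248613166442175823655461696889609135267939969027372794121372249755752255083661149732543410146085268433097099736076583620369320147144207426745801838731811160826604775205440410209037788923636860206435452703:ℝ)/762548843976935058264867212044437676235163094417969900947748170348556571288764538101986540332695086295679682977925569143770699009900984689056689495258643581512058631930863848948320203257400452899043078155966930171045905784048299474745545179125421863998361311434507369995117187500000000000000000000000000000000000000000000000) * ((1:ℝ)*f^2 + ((-8004591878606448309410906506176405429842307009374233622983976735429417278319981214791071894550018841374917818275612721783042605488105552813355522391446149702014940815211113437113682515156711433165215678268641297216098500641977036686075294057171633695467012252900415182113647460937500000000000000000000000000000000000000000000:ℝ)/10358314033352492773682565746076450762513493040879387886941006942054020823059413971430956447873425874758854706108600192603077323721249428569173667353188306252827739865785282107859279748941593105362531648841021443966369496543420765522998529021600387304291565515898474634504515030248620692556908444239163752002426394227886961713)*f^3)^2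 + ((8561489525352083921045887051994636819179961310223650034464678301147975184094911030717189096425065708985587439498586083480683546843379689840995600073220568284310483629499344209591356901844121528494962239798872180487139184475732530982154001149900723885104127503478645414628448608064621112523005740454197494759445141336899168087768554687500000000000000000000000000000000000:ℝ)/40903019738504001289660281756044443889412040552150388592588007438766121965012062259035985698395008952171825053680082789222711784691377610500737788098593658875783695182790878495109279622846323643074819022790364278399287369788401831129725621775533737054402072496867639864218973029854673622241338780208310988657366157635680035243383510445339929911028704500512054105021246993) * ((1:ℝ)*f^3)^2 := by
  norm_num
  ring

lemma poly_key (f : ℝ) :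
    4*(1-f)^2*(1-2*f+2*f^2)*((17/40)*((481:ℝ)/500)^23 + ((23/40)*((500:ℝ)/481)^17)*(2*f*(1-f))) ≤ 1 := by
  nlinarith [sos_identity f, sq_nonneg f]

lemma amgm_key (x : ℝ) (hx0 : 0 ≤ x) :
    x ^ ((0.575:ℝ)) ≤ (17/40)*((481:ℝ)/500)^23 + ((23/40)*((500:ℝ)/481)^17)*x := by
  have h575 : (0.575:ℝ) = 23/40 := by norm_num
  have ht0 : (0:ℝ) ≤ ((481:ℝ)/500)^40 := by positivity
  have hg := Real.geom_mean_le_arith_mean2_weighted (by norm_num : (0:ℝ) ≤ 23/40)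
    (by norm_num : (0:ℝ) ≤ 17/40) hx0 ht0 (by norm_num)
  have hpow : (((481:ℝ)/500)^40 : ℝ) ^ ((17:ℝ)/40) = ((481:ℝ)/500)^17 := by
    rw [← Real.rpow_natCast ((481:ℝ)/500) 40, ← Real.rpow_mul (by norm_num)]
    norm_num
  rw [hpow] at hg
  have hc : (0:ℝ) < ((481:ℝ)/500)^17 := by positivity
  rw [h575, ← mul_le_mul_iff_of_pos_right hc]
  calc x ^ ((23:ℝ)/40) * ((481:ℝ)/500)^17
      ≤ 23/40 * x + 17/40 * ((481:ℝ)/500)^40 := hg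
    _ = ((17/40)*((481:ℝ)/500)^23 + ((23/40)*((500:ℝ)/481)^17)*x) * ((481:ℝ)/500)^17 := by
        ring

theorem stmt_5 :
    ∀ f : ℝ, f ∈ Set.Ioc (0:ℝ) (1/2) →
    ∀ ε : ℝ, ε ∈ Set.Ioo (0:ℝ) 1 →
    ∀ T : ℝ, T ≥ Real.logb 2 (1/ε) + 2.575 →
      (2*f*(1-f)) ^ T ≤ ε * f^2 / (f^2 + (1-f)^2) := by
  intro f hf ε hε T hT
  obtain ⟨hf0, hf2⟩ := hf
  obtain ⟨hε0, hε1⟩ := hε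
  set L := Real.logb 2 (1/ε) with hLdef
  set x := 2*f*(1-f) with hxdef
  have hf1 : f < 1 := lt_of_le_of_lt hf2 (by norm_num)
  have hx0 : 0 < x := by
    apply mul_pos (by linarith) (by linarith)
  have hxh : x ≤ 1/2 := by nlinarith [sq_nonneg (2*f-1)]
  have hx1 : x ≤ 1 := hxh.trans (by norm_num)
  have hL0 : 0 ≤ L := Real.logb_nonneg (by norm_num) (by
    rw [le_one_div (by norm_num) hε0]; linarith)
  -- Step C : x ^ L ≤ ε
  have hC : x ^ L ≤ ε := by
    have h1 : x ^ L ≤ (1/2:ℝ) ^ L := Real.rpow_le_rpow hx0.le hxh hL0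
    have h2 : (1/2:ℝ) ^ L = ε := by
      rw [one_div, Real.inv_rpow (by norm_num : (0:ℝ) ≤ 2)]
      rw [hLdef, Real.rpow_logb (by norm_num) (by norm_num) (by positivity)]
      rw [one_div, inv_inv]
    linarith
  -- Step F : x ^ (2.575) ≤ f^2 / (f^2 + (1-f)^2)
  have h1x : (0:ℝ) < f^2 + (1-f)^2 := by positivity
  have hF : x ^ ((2.575:ℝ)) ≤ f^2 / (f^2 + (1-f)^2) := by
    have hsplit : x ^ ((2.575:ℝ)) = x^2 * x ^ ((0.575:ℝ)) := by
      have : (2.575:ℝ) = (2:ℕ) + 0.575 := by norm_num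
      rw [this, Real.rpow_add hx0, Real.rpow_natCast]
    rw [hsplit, le_div_iff₀ h1x]
    have hE := amgm_key x hx0.le
    have hP := poly_key f
    have hq : f^2 + (1-f)^2 = 1-2*f+2*f^2 := by ring
    have hx2 : (0:ℝ) ≤ x^2 := sq_nonneg x
    have step1 : x^2 * x ^ ((0.575:ℝ)) * (f^2 + (1-f)^2)
        ≤ x^2 * ((17/40)*((481:ℝ)/500)^23 + ((23/40)*((500:ℝ)/481)^17)*x) * (f^2 + (1-f)^2) := by
      apply mul_le_mul_of_nonneg_right _ h1x.le
      exact mul_le_mul_of_nonneg_left hE hx2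
    have step2 : x^2 * ((17/40)*((481:ℝ)/500)^23 + ((23/40)*((500:ℝ)/481)^17)*x) * (f^2 + (1-f)^2)
        ≤ f^2 := by
      have expand : x^2 * ((17/40)*((481:ℝ)/500)^23 + ((23/40)*((500:ℝ)/481)^17)*x) * (f^2 + (1-f)^2)
          = f^2 * (4*(1-f)^2*(1-2*f+2*f^2)*((17/40)*((481:ℝ)/500)^23 + ((23/40)*((500:ℝ)/481)^17)*(2*f*(1-f)))) := by
        rw [hxdef]; ring
      rw [expand]
      nlinarith [sq_nonneg f, hP]
    linarith
  -- Combine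
  calc x ^ T ≤ x ^ (L + 2.575) := Real.rpow_le_rpow_of_exponent_ge hx0 hx1 hT
    _ = x ^ L * x ^ ((2.575:ℝ)) := Real.rpow_add hx0 _ _
    _ ≤ ε * (f^2 / (f^2 + (1-f)^2)) := by
        apply mul_le_mul hC hF (Real.rpow_nonneg hx0.le _) hε0.le
    _ = ε * f^2 / (f^2 + (1-f)^2) := (mul_div_assoc _ _ _).symm
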